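/- If there exists ε > 0 such that V(z) ≥ ε for all z ∈ ℂⁿ (supersymmetry is broken with no runaway direction), then the subsystem of equations {∂W/∂z_j = 0 : q_j ≥ 2} has no solution in ℂⁿ, and the subsystem {∂W/∂z_j = 0 : q_j ≤ 2} also has no solution in ℂⁿ. -/

import Mathlib

open Complex Filter Topology

private lemma scale_deriv (n : ℕ) (W : (Fin n → ℂ) → ℂ) (hW : Differentiable ℂ W)
    (q : Fin n → ℝ)
    (hR : ∀ (α : ℂ) (z : Fin n → ℂ),
      W (fun j => Complex.exp ((q j : ℂ) * α) * z j) = Complex.exp (2 * α) * W z)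
    (α : ℂ) (z : Fin n → ℂ) (j : Fin n) :
    fderiv ℂ W (fun k => Complex.exp ((q k : ℂ) * α) * z k) (Pi.single j 1)
      = Complex.exp ((2 - (q j : ℂ)) * α) * fderiv ℂ W z (Pi.single j 1) := by
  set L : (Fin n → ℂ) →L[ℂ] (Fin n → ℂ) :=
    ContinuousLinearMap.pi (fun k => Complex.exp ((q k : ℂ) * α) • ContinuousLinearMap.proj k)
    with hLdef
  have hL : ∀ w : Fin n → ℂ, L w = fun k => Complex.exp ((q k : ℂ) * α) * w k := fun w => rfl
  have hcomp : (fun w => W (L w)) = fun w => Complex.exp (2 * α) * W w := by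
    funext w; rw [hL]; exact hR α w
  have h1 : fderiv ℂ (fun w => W (L w)) z = (fderiv ℂ W (L z)).comp L := by
    have := fderiv_comp (𝕜 := ℂ) z (hW (L z)) L.differentiableAt
    simpa [Function.comp_def, L.fderiv] using this
  have h2 : fderiv ℂ (fun w => Complex.exp (2 * α) * W w) z
      = Complex.exp (2 * α) • fderiv ℂ W z := by
    simpa using fderiv_const_mul (hW z) (Complex.exp (2 * α))
  have heq : (fderiv ℂ W (L z)).comp L = Complex.exp (2 * α) • fderiv ℂ W z := by
    rw [← h1, ← h2, hcomp]
  have hsingle : L (Pi.single j 1) = Complex.exp ((q j : ℂ) * α) • (Pi.single j 1 : Fin n → ℂ) := by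
    funext k
    by_cases h : k = j
    · subst h; simp [hL]
    · simp [hL, Pi.single_apply, h]
  have happ := congrFun (congrArg (fun (f : (Fin n → ℂ) →L[ℂ] ℂ) => (f : (Fin n → ℂ) → ℂ)) heq)
      (Pi.single j 1)
  simp only [ContinuousLinearMap.comp_apply, ContinuousLinearMap.coe_smul', Pi.smul_apply,
    smul_eq_mul] at happ
  rw [hsingle, map_smul, smul_eq_mul] at happ
  have hne : Complex.exp ((q j : ℂ) * α) ≠ 0 := Complex.exp_ne_zero _
  rw [← hL z]
  apply mul_left_cancel₀ hne
  rw [happ, ← mul_assoc, ← Complex.exp_add]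
  ring_nf

private lemma no_sol_aux (n : ℕ) (W : (Fin n → ℂ) → ℂ) (hW : Differentiable ℂ W)
    (q : Fin n → ℝ)
    (hR : ∀ (α : ℂ) (z : Fin n → ℂ),
      W (fun j => Complex.exp ((q j : ℂ) * α) * z j) = Complex.exp (2 * α) * W z)
    (V : (Fin n → ℂ) → ℝ)
    (hV : ∀ z, V z = ∑ j, ‖fderiv ℂ W z (Pi.single j 1)‖ ^ 2)
    (ε : ℝ) (hε : 0 < ε) (hbound : ∀ z, ε ≤ V z)
    (z : Fin n → ℂ) (l : Filter ℝ) [l.NeBot]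
    (hj : ∀ j, fderiv ℂ W z (Pi.single j 1) ≠ 0 →
      Tendsto (fun t : ℝ => (2 - q j) * t) l atBot) : False := by
  have hterm : ∀ j : Fin n, Tendsto
      (fun t : ℝ => Real.exp ((2 - q j) * t) ^ 2 * ‖fderiv ℂ W z (Pi.single j 1)‖ ^ 2)
      l (𝓝 0) := by
    intro j
    by_cases hD : fderiv ℂ W z (Pi.single j 1) = 0
    · simpa [hD] using tendsto_const_nhds (α := ℝ) (f := l) (a := (0:ℝ))
    · have h := Real.tendsto_exp_atBot.comp (hj j hD)
      have := (h.pow 2).mul_const (‖fderiv ℂ W z (Pi.single j 1)‖ ^ 2)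
      simpa using this
  have hsum : Tendsto (fun t : ℝ => V (fun k => Complex.exp ((q k : ℂ) * (t : ℂ)) * z k))
      l (𝓝 0) := by
    have h := tendsto_finset_sum Finset.univ (fun j (_ : j ∈ Finset.univ) => hterm j)
    simp only [Finset.sum_const_zero] at h
    refine h.congr (fun t => ?_)
    rw [hV]
    refine Finset.sum_congr rfl (fun j _ => ?_)
    rw [scale_deriv n W hW q hR (t : ℂ) z j]
    rw [norm_mul, mul_pow]
    congr 1
    rw [Complex.norm_exp]
    congr 1
    push_cast
    simp
  have hev : ∀ᶠ t : ℝ in l, V (fun k => Complex.exp ((q k : ℂ) * (t : ℂ)) * z k) < ε :=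
    hsum.eventually (gt_mem_nhds hε)
  obtain ⟨t, ht⟩ := hev.exists
  exact absurd (hbound _) (not_le.mpr ht)

theorem no_runaway_necessary_condition
    (n : ℕ) (W : (Fin n → ℂ) → ℂ) (hW : Differentiable ℂ W)
    (q : Fin n → ℝ)
    (hR : ∀ (α : ℂ) (z : Fin n → ℂ),
      W (fun j => Complex.exp ((q j : ℂ) * α) * z j) = Complex.exp (2 * α) * W z)
    (V : (Fin n → ℂ) → ℝ)
    (hV : ∀ z, V z = ∑ j, ‖fderiv ℂ W z (Pi.single j 1)‖ ^ 2)
    (ε : ℝ) (hε : 0 < ε) (hbound : ∀ z, ε ≤ V z) :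
    (¬ ∃ z : Fin n → ℂ, ∀ j, 2 ≤ q j → fderiv ℂ W z (Pi.single j 1) = 0) ∧
    (¬ ∃ z : Fin n → ℂ, ∀ j, q j ≤ 2 → fderiv ℂ W z (Pi.single j 1) = 0) := by
  constructor
  · rintro ⟨z, hz⟩
    refine no_sol_aux n W hW q hR V hV ε hε hbound z atBot (fun j hD => ?_)
    have hq : q j < 2 := by
      by_contra h
      exact hD (hz j (not_lt.mp h))
    have : (0:ℝ) < 2 - q j := by linarith
    exact (tendsto_const_mul_atBot_of_pos this).2 tendsto_id
  · rintro ⟨z, hz⟩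
    refine no_sol_aux n W hW q hR V hV ε hε hbound z atTop (fun j hD => ?_)
    have hq : 2 < q j := by
      by_contra h
      exact hD (hz j (not_lt.mp h))
    have : 2 - q j < 0 := by linarith
    exact (tendsto_const_mul_atBot_of_neg this).2 tendsto_id
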